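/- Let p ≥ 1, let T_p be an invertible p×p matrix over F₂, let n ≥ 0, and set G = T₂^{⊗n} ⊗ T_p with N = 2^n·p. For every K with 1 ≤ K ≤ N, let V(K) denote the K-th largest element (with multiplicity) of the multiset { S_{T₂^{⊗n}}(i) · S_{T_p}(j) : 1 ≤ i ≤ 2^n, 1 ≤ j ≤ p }. Then there exists a subset I ⊆ {0,…,N−1} of size K such that d_G(I) ≥ V(K), i.e., every nonzero F₂-linear combination of the rows of G indexed by I has Hamming weight at least V(K). -/

import Mathlib

open Matrix

noncomputable section

abbrev F2 : Type := ZMod 2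

/-- The Arikan kernel `T₂ = ((1,0),(1,1))` over `F₂`. -/
def T2 : Matrix (Fin 2) (Fin 2) F2 := !![1, 0; 1, 1]

/-- Kronecker product of `Fin`-indexed square matrices, with the standard index
convention `(A ⊗ B) i j = A (i / n) (j / n) * B (i % n) (j % n)`. -/
def kron {m n : ℕ} (A : Matrix (Fin m) (Fin m) F2) (B : Matrix (Fin n) (Fin n) F2) :
    Matrix (Fin (m * n)) (Fin (m * n)) F2 :=
  fun i j => A i.divNat j.divNat * B i.modNat j.modNat

/-- The `n`-fold Kronecker power of `T₂` (with `T₂^{⊗0}` the 1×1 identity). -/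
def T2pow : (n : ℕ) → Matrix (Fin (2 ^ n)) (Fin (2 ^ n)) F2
  | 0 => 1
  | n + 1 => (kron T2 (T2pow n)).submatrix
      (Fin.cast (by rw [pow_succ, Nat.mul_comm]))
      (Fin.cast (by rw [pow_succ, Nat.mul_comm]))

/-- Minimum distance `d_G(I)`: the minimum Hamming weight of `u · G` over all
nonzero row vectors `u` with support contained in `I`. -/
def minDist {N : ℕ} (G : Matrix (Fin N) (Fin N) F2) (I : Finset (Fin N)) : ℕ :=
  sInf {w | ∃ u : Fin N → F2, u ≠ 0 ∧ (∀ i, u i ≠ 0 → i ∈ I) ∧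
    hammingNorm (Matrix.vecMul u G) = w}

/-- Minimum-distance spectrum `S_G(K)`: the maximum of `d_G(I)` over all
row-index sets `I` of size `K`. -/
def spec {N : ℕ} (G : Matrix (Fin N) (Fin N) F2) (K : ℕ) : ℕ :=
  sSup {d | ∃ I : Finset (Fin N), I.card = K ∧ minDist G I = d}

/-- `K`-th largest element (1-indexed, counted with multiplicity) of a
multiset of natural numbers. -/
def kthLargest (s : Multiset ℕ) (K : ℕ) : ℕ :=
  ((s.sort (· ≤ ·)).reverse).getD (K - 1) 0

section KL

variable {s : Multiset ℕ} {K : ℕ}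

lemma kthLargest_eq_getElem (hK1 : 1 ≤ K) (hK2 : K ≤ Multiset.card s) :
    kthLargest s K = (s.sort (· ≤ ·))[(s.sort (· ≤ ·)).length - K]'(by
      rw [Multiset.length_sort]; omega) := by
  have hlen : (s.sort (· ≤ ·)).length = Multiset.card s := Multiset.length_sort _
  rw [kthLargest, List.getD_eq_getElem _ _ (by rw [List.length_reverse, hlen]; omega),
    List.getElem_reverse]
  congr 1
  omega

lemma count_ge_kth (hK1 : 1 ≤ K) (hK2 : K ≤ Multiset.card s) :
    K ≤ Multiset.card (s.filter (fun x => kthLargest s K ≤ x)) := by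
  classical
  have hlen : (s.sort (· ≤ ·)).length = Multiset.card s := Multiset.length_sort _
  set l := s.sort (· ≤ ·) with hl
  have hsort : l.Pairwise (· ≤ ·) := Multiset.pairwise_sort _ _
  have hcoe : (l : Multiset ℕ) = s := Multiset.sort_eq _ _
  set t := kthLargest s K with ht
  have htval : t = l[l.length - K]'(by omega) := kthLargest_eq_getElem hK1 hK2
  rw [← hcoe, Multiset.filter_coe, Multiset.coe_card]
  have hsub : (l.drop (l.length - K)).Sublist l := List.drop_sublist _ _
  have hall : ∀ x ∈ l.drop (l.length - K), t ≤ x := by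
    intro x hx
    obtain ⟨i, hi, rfl⟩ := List.mem_iff_getElem.mp hx
    rw [List.getElem_drop]
    rw [htval]
    simpa [List.get_eq_getElem] using hsort.rel_get_of_le (a := ⟨l.length - K, by omega⟩)
      (b := ⟨l.length - K + i, by simpa using (by simp [List.length_drop] at hi; omega : l.length - K + i < l.length)⟩)
      (Fin.mk_le_mk.mpr (by simp [List.length_drop] at hi; omega))
  calc K = (l.drop (l.length - K)).length := by rw [List.length_drop]; omega
  _ = (l.drop (l.length - K)).countP (fun x => decide (t ≤ x)) := by
        rw [List.countP_eq_length.mpr (by intro a ha; simpa using hall a ha)]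
  _ ≤ l.countP (fun x => decide (t ≤ x)) := hsub.countP_le
  _ = (l.filter (fun x => decide (t ≤ x))).length := (List.countP_eq_length_filter)
  _ = (List.filter (fun x => decide (t ≤ x)) l).length := rfl

lemma count_gt_kth (hK1 : 1 ≤ K) (hK2 : K ≤ Multiset.card s) :
    Multiset.card (s.filter (fun x => kthLargest s K < x)) < K := by
  classical
  have hlen : (s.sort (· ≤ ·)).length = Multiset.card s := Multiset.length_sort _
  set l := s.sort (· ≤ ·) with hl
  have hsort : l.Pairwise (· ≤ ·) := Multiset.pairwise_sort _ _
  have hcoe : (l : Multiset ℕ) = s := Multiset.sort_eq _ _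
  set t := kthLargest s K with ht
  have htval : t = l[l.length - K]'(by omega) := kthLargest_eq_getElem hK1 hK2
  rw [← hcoe, Multiset.filter_coe, Multiset.coe_card]
  have hsplit : l = l.take (l.length - K + 1) ++ l.drop (l.length - K + 1) :=
    (List.take_append_drop _ _).symm
  have hcount : l.countP (fun x => decide (t < x)) < K := by
    conv_lhs => rw [hsplit]
    rw [List.countP_append]
    have h1 : (l.take (l.length - K + 1)).countP (fun x => decide (t < x)) = 0 := by
      rw [List.countP_eq_zero]
      intro x hx
      obtain ⟨i, hi, rfl⟩ := List.mem_iff_getElem.mp hx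
      have hi' : i < l.length - K + 1 := by
        simpa using (by simp [List.length_take] at hi; omega : i < l.length - K + 1)
      rw [List.getElem_take]
      simp only [decide_eq_true_eq, not_lt]
      rw [htval]
      rcases Nat.lt_or_ge i (l.length - K) with h | h
      · simpa [List.get_eq_getElem] using hsort.rel_get_of_lt (a := ⟨i, by omega⟩) (b := ⟨l.length - K, by omega⟩) (by simpa using h)
      · have : i = l.length - K := by omega
        subst this; exact le_rfl
    rw [h1, Nat.zero_add]
    calc (l.drop (l.length - K + 1)).countP _ ≤ (l.drop (l.length - K + 1)).length :=
          List.countP_le_length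
    _ = l.length - (l.length - K + 1) := List.length_drop
    _ < K := by omega
  calc (List.filter (fun x => decide (t < x)) l).length
      = l.countP (fun x => decide (t < x)) := (List.countP_eq_length_filter).symm
  _ < K := hcount

lemma le_kthLargest_of_count (hK1 : 1 ≤ K) {t : ℕ}
    (h : K ≤ Multiset.card (s.filter (fun x => t ≤ x))) :
    t ≤ kthLargest s K := by
  classical
  have hK2 : K ≤ Multiset.card s := le_trans h (Multiset.card_le_card (Multiset.filter_le _ _))
  by_contra hlt
  push_neg at hlt
  have hsub : Multiset.card (s.filter (fun x => t ≤ x))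
      ≤ Multiset.card (s.filter (fun x => kthLargest s K < x)) := by
    apply Multiset.card_le_card
    apply Multiset.monotone_filter_right
    intro x hx
    omega
  have := count_gt_kth hK1 hK2
  omega

lemma kthLargest_antitone {K' : ℕ} (hK1 : 1 ≤ K) (hKK : K ≤ K') (hK2 : K' ≤ Multiset.card s) :
    kthLargest s K' ≤ kthLargest s K := by
  rw [kthLargest_eq_getElem hK1 (le_trans hKK hK2), kthLargest_eq_getElem (by omega) hK2]
  have hsort : (s.sort (· ≤ ·)).Pairwise (· ≤ ·) := Multiset.pairwise_sort _ _
  have hlen : (s.sort (· ≤ ·)).length = Multiset.card s := Multiset.length_sort _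
  simpa [List.get_eq_getElem] using hsort.rel_get_of_le (a := ⟨(s.sort (· ≤ ·)).length - K', by omega⟩)
    (b := ⟨(s.sort (· ≤ ·)).length - K, by omega⟩) (Fin.mk_le_mk.mpr (by omega))

end KL

section MD
variable {N : ℕ} {G : Matrix (Fin N) (Fin N) F2} {I : Finset (Fin N)}

lemma hammingNorm_le_card (v : Fin N → F2) : hammingNorm v ≤ N := by
  classical
  calc hammingNorm v ≤ (Finset.univ : Finset (Fin N)).card := Finset.card_filter_le _ _
  _ = N := by simp

lemma minDist_le {u : Fin N → F2} (hu : u ≠ 0) (hs : ∀ i, u i ≠ 0 → i ∈ I) :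
    minDist G I ≤ hammingNorm (Matrix.vecMul u G) :=
  Nat.sInf_le ⟨u, hu, hs, rfl⟩

lemma single_mem (hI : I.Nonempty) :
    ∃ u : Fin N → F2, u ≠ 0 ∧ (∀ i, u i ≠ 0 → i ∈ I) := by
  classical
  obtain ⟨i, hi⟩ := hI
  refine ⟨Pi.single i 1, ?_, ?_⟩
  · intro h
    have := congrFun h i
    simp [Pi.single_eq_same] at this
  · intro j hj
    by_contra hji
    have hne : j ≠ i := fun h => hji (h ▸ hi)
    rw [Pi.single_eq_of_ne hne] at hj
    exact hj rfl

lemma exists_minDist (hI : I.Nonempty) :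
    ∃ u : Fin N → F2, u ≠ 0 ∧ (∀ i, u i ≠ 0 → i ∈ I) ∧
      hammingNorm (Matrix.vecMul u G) = minDist G I := by
  obtain ⟨u, hu, hs⟩ := single_mem hI
  have hne : {w | ∃ u : Fin N → F2, u ≠ 0 ∧ (∀ i, u i ≠ 0 → i ∈ I) ∧
      hammingNorm (Matrix.vecMul u G) = w}.Nonempty := ⟨_, u, hu, hs, rfl⟩
  obtain ⟨u', hu', hs', hw⟩ := Nat.sInf_mem hne
  exact ⟨u', hu', hs', hw⟩

lemma le_minDist {t : ℕ} (hI : I.Nonempty)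
    (h : ∀ u : Fin N → F2, u ≠ 0 → (∀ i, u i ≠ 0 → i ∈ I) →
      t ≤ hammingNorm (Matrix.vecMul u G)) : t ≤ minDist G I := by
  obtain ⟨u, hu, hs, hw⟩ := exists_minDist (G := G) hI
  exact hw ▸ h u hu hs

lemma minDist_le_N : minDist G I ≤ N := by
  rcases I.eq_empty_or_nonempty with rfl | hI
  · have : {w | ∃ u : Fin N → F2, u ≠ 0 ∧ (∀ i, u i ≠ 0 → i ∈ (∅ : Finset (Fin N))) ∧
        hammingNorm (Matrix.vecMul u G) = w} = ∅ := by
      ext w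
      simp only [Set.mem_setOf_eq, Set.mem_empty_iff_false, iff_false]
      rintro ⟨u, hu, hs, -⟩
      obtain ⟨i, hi⟩ := Function.ne_iff.mp hu
      exact absurd (hs i hi) (by simp)
    rw [minDist, this, Nat.sInf_empty]
    exact Nat.zero_le _
  · obtain ⟨u, hu, hs⟩ := single_mem hI
    exact le_trans (minDist_le hu hs) (hammingNorm_le_card _)

lemma spec_bddAbove {K : ℕ} :
    BddAbove {d | ∃ I : Finset (Fin N), I.card = K ∧ minDist G I = d} := by
  refine ⟨N, ?_⟩
  rintro d ⟨I, -, rfl⟩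
  exact minDist_le_N

lemma le_spec {K : ℕ} (h : I.card = K) : minDist G I ≤ spec G K :=
  le_csSup spec_bddAbove ⟨I, h, rfl⟩

lemma exists_spec {K : ℕ} (hK : K ≤ N) :
    ∃ I : Finset (Fin N), I.card = K ∧ minDist G I = spec G K := by
  obtain ⟨I₀, -, hc⟩ := Finset.exists_subset_card_eq (s := (Finset.univ : Finset (Fin N))) (n := K) (by simpa)
  have hmem := Nat.sSup_mem (s := {d | ∃ I : Finset (Fin N), I.card = K ∧ minDist G I = d})
    ⟨_, I₀, hc, rfl⟩ spec_bddAbove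
  exact hmem

lemma spec_le_N {K : ℕ} (hK : K ≤ N) : spec G K ≤ N := by
  obtain ⟨I, -, hd⟩ := exists_spec (G := G) hK
  rw [← hd]
  exact minDist_le_N

lemma spec_anti {K L : ℕ} (h1 : 1 ≤ K) (h2 : K ≤ L) (h3 : L ≤ N) : spec G L ≤ spec G K := by
  induction L, h2 using Nat.le_induction with
  | base => exact le_rfl
  | succ L hKL ih =>
    have hL1 : 1 ≤ L := le_trans h1 hKL
    have hLN : L ≤ N := by omega
    refine le_trans ?_ (ih hLN)
    obtain ⟨I, hc, hd⟩ := exists_spec (G := G) (K := L + 1) h3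
    obtain ⟨I', hsub, hc'⟩ := Finset.exists_subset_card_eq (s := I) (n := L) (by omega)
    have hI' : I'.Nonempty := Finset.card_pos.mp (by omega)
    obtain ⟨u, hu, hs, hw⟩ := exists_minDist (G := G) hI'
    have : minDist G I ≤ minDist G I' := by
      rw [← hw]
      exact minDist_le hu (fun i hi => hsub (hs i hi))
    calc spec G (L + 1) = minDist G I := hd.symm
    _ ≤ minDist G I' := this
    _ ≤ spec G L := le_spec hc'
end MD

section KRON
variable {m n : ℕ}

lemma e_divNat (a : Fin m) (b : Fin n) : (finProdFinEquiv (a, b)).divNat = a := by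
  have h := finProdFinEquiv.symm_apply_apply (a, b)
  have : finProdFinEquiv.symm (finProdFinEquiv (a, b)) =
      ((finProdFinEquiv (a, b)).divNat, (finProdFinEquiv (a, b)).modNat) := rfl
  rw [this] at h
  exact congrArg Prod.fst h

lemma e_modNat (a : Fin m) (b : Fin n) : (finProdFinEquiv (a, b)).modNat = b := by
  have h := finProdFinEquiv.symm_apply_apply (a, b)
  have : finProdFinEquiv.symm (finProdFinEquiv (a, b)) =
      ((finProdFinEquiv (a, b)).divNat, (finProdFinEquiv (a, b)).modNat) := rfl
  rw [this] at h
  exact congrArg Prod.snd h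

lemma vecMul_apply {N : ℕ} (u : Fin N → F2) (M : Matrix (Fin N) (Fin N) F2) (j : Fin N) :
    Matrix.vecMul u M j = ∑ i, u i * M i j := by
  simp [Matrix.vecMul, dotProduct]

lemma hammingNorm_comp_equiv {α : Type*} [Fintype α] [DecidableEq α]
    {N : ℕ} (f : Fin N → F2) (e : α ≃ Fin N) :
    hammingNorm (fun a => f (e a)) = hammingNorm f := by
  classical
  unfold hammingNorm
  apply Finset.card_bij' (fun a _ => e a) (fun i _ => e.symm i) <;> simp

lemma hammingNorm_prod_fst (g : Fin m × Fin n → F2) :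
    hammingNorm g = ∑ c : Fin m, hammingNorm (fun d => g (c, d)) := by
  classical
  unfold hammingNorm
  rw [Finset.card_filter, Fintype.sum_prod_type]
  congr 1
  funext c
  rw [Finset.card_filter]

lemma hammingNorm_prod_snd (g : Fin m × Fin n → F2) :
    hammingNorm g = ∑ d : Fin n, hammingNorm (fun c => g (c, d)) := by
  classical
  unfold hammingNorm
  rw [Finset.card_filter, Fintype.sum_prod_type_right]
  congr 1
  funext d
  rw [Finset.card_filter]

lemma vecMul_kron_apply (A : Matrix (Fin m) (Fin m) F2) (B : Matrix (Fin n) (Fin n) F2)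
    (u : Fin (m * n) → F2) (c : Fin m) (d : Fin n) :
    Matrix.vecMul u (kron A B) (finProdFinEquiv (c, d)) =
      ∑ a, ∑ b, u (finProdFinEquiv (a, b)) * (A a c * B b d) := by
  rw [vecMul_apply, ← finProdFinEquiv.sum_comp (fun i => u i * kron A B i (finProdFinEquiv (c, d)))]
  rw [Fintype.sum_prod_type]
  congr 1; funext a; congr 1; funext b
  rw [kron, e_divNat, e_modNat, e_divNat, e_modNat]

lemma kron_col (A : Matrix (Fin m) (Fin m) F2) (B : Matrix (Fin n) (Fin n) F2)
    (u : Fin (m * n) → F2) (d : Fin n) :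
    (fun c => Matrix.vecMul u (kron A B) (finProdFinEquiv (c, d))) =
      Matrix.vecMul (fun a => Matrix.vecMul (fun b => u (finProdFinEquiv (a, b))) B d) A := by
  funext c
  rw [vecMul_kron_apply, vecMul_apply]
  congr 1; funext a
  rw [vecMul_apply, Finset.sum_mul]
  congr 1; funext b
  ring

lemma kron_row (A : Matrix (Fin m) (Fin m) F2) (B : Matrix (Fin n) (Fin n) F2)
    (u : Fin (m * n) → F2) (c : Fin m) :
    (fun d => Matrix.vecMul u (kron A B) (finProdFinEquiv (c, d))) =
      Matrix.vecMul (fun b => ∑ a, A a c * u (finProdFinEquiv (a, b))) B := by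
  funext d
  rw [vecMul_kron_apply, vecMul_apply, Finset.sum_comm]
  congr 1; funext b
  rw [Finset.sum_mul]
  congr 1; funext a
  ring

lemma wt_kron_rows (A : Matrix (Fin m) (Fin m) F2) (B : Matrix (Fin n) (Fin n) F2)
    (u : Fin (m * n) → F2) :
    hammingNorm (Matrix.vecMul u (kron A B)) =
      ∑ c : Fin m, hammingNorm (Matrix.vecMul (fun b => ∑ a, A a c * u (finProdFinEquiv (a, b))) B) := by
  rw [← hammingNorm_comp_equiv (Matrix.vecMul u (kron A B)) finProdFinEquiv]
  rw [hammingNorm_prod_fst (fun cd : Fin m × Fin n => Matrix.vecMul u (kron A B) (finProdFinEquiv cd))]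
  congr 1; funext c
  congr 1
  exact kron_row A B u c

lemma wt_kron_cols (A : Matrix (Fin m) (Fin m) F2) (B : Matrix (Fin n) (Fin n) F2)
    (u : Fin (m * n) → F2) :
    hammingNorm (Matrix.vecMul u (kron A B)) =
      ∑ d : Fin n, hammingNorm
        (Matrix.vecMul (fun a => Matrix.vecMul (fun b => u (finProdFinEquiv (a, b))) B d) A) := by
  rw [← hammingNorm_comp_equiv (Matrix.vecMul u (kron A B)) finProdFinEquiv]
  rw [hammingNorm_prod_snd (fun cd : Fin m × Fin n => Matrix.vecMul u (kron A B) (finProdFinEquiv cd))]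
  congr 1; funext d
  congr 1
  exact kron_col A B u d

lemma wt_T2_kron {M : ℕ} (G : Matrix (Fin M) (Fin M) F2) (u : Fin (2 * M) → F2) :
    hammingNorm (Matrix.vecMul u (kron T2 G)) =
      hammingNorm (Matrix.vecMul
        (fun b => u (finProdFinEquiv (0, b)) + u (finProdFinEquiv (1, b))) G) +
      hammingNorm (Matrix.vecMul (fun b => u (finProdFinEquiv (1, b))) G) := by
  rw [wt_kron_rows, Fin.sum_univ_two]
  have h0 : (fun b => ∑ a : Fin 2, T2 a 0 * u (finProdFinEquiv (a, b))) =
      (fun b => u (finProdFinEquiv (0, b)) + u (finProdFinEquiv (1, b))) := by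
    funext b
    rw [Fin.sum_univ_two]
    simp [T2]
  have h1 : (fun b => ∑ a : Fin 2, T2 a 1 * u (finProdFinEquiv (a, b))) =
      (fun b => u (finProdFinEquiv (1, b))) := by
    funext b
    rw [Fin.sum_univ_two]
    simp [T2]
  rw [h0, h1]

lemma wt_vecMul_submatrix {N N' : ℕ} (e : Fin N ≃ Fin N') (M : Matrix (Fin N') (Fin N') F2)
    (u : Fin N → F2) :
    hammingNorm (Matrix.vecMul u (M.submatrix e e)) =
      hammingNorm (Matrix.vecMul (fun i' => u (e.symm i')) M) := by
  have key : ∀ j, Matrix.vecMul u (M.submatrix e e) j =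
      Matrix.vecMul (fun i' => u (e.symm i')) M (e j) := by
    intro j
    rw [vecMul_apply, vecMul_apply, ← e.sum_comp (fun i' => u (e.symm i') * M i' (e j))]
    simp [Matrix.submatrix]
  have : Matrix.vecMul u (M.submatrix e e) =
      fun j => Matrix.vecMul (fun i' => u (e.symm i')) M (e j) := funext key
  rw [this, hammingNorm_comp_equiv]
end KRON

/-- card of initial segment of Fin m -/
lemma card_filter_val_lt {m c : ℕ} (hc : c ≤ m) :
    ((Finset.univ : Finset (Fin m)).filter (fun i => i.val < c)).card = c := by
  classical
  conv_rhs => rw [← Finset.card_range c]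
  refine Finset.card_bij' (fun (i : Fin m) _ => i.val)
    (fun (j : ℕ) hj => (⟨j, ?_⟩ : Fin m)) ?_ ?_ ?_ ?_
  · have := Finset.mem_range.mp hj; omega
  · intro i hi
    simp only [Finset.mem_filter] at hi
    exact Finset.mem_range.mpr hi.2
  · intro j hj
    have := Finset.mem_range.mp hj
    simp only [Finset.mem_filter, Finset.mem_univ, true_and]
    exact this
  · intro i hi; rfl
  · intro j hj; rfl

/-- threshold lemma: if at least k indices i (1-based value i+1) satisfy `t ≤ f (i+1)`,
and f is antitone on positives, then `t ≤ f k`. -/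
lemma count_thresh {m : ℕ} (f : ℕ → ℕ) (hf : ∀ i j, 1 ≤ i → i ≤ j → j ≤ m → f j ≤ f i)
    {t k : ℕ} (h1 : 1 ≤ k) (hkm : k ≤ m)
    (hk : k ≤ ((Finset.univ : Finset (Fin m)).filter (fun i => t ≤ f (i.val + 1))).card) :
    t ≤ f k := by
  classical
  by_contra hlt
  push_neg at hlt
  have hsub : (Finset.univ : Finset (Fin m)).filter (fun i => t ≤ f (i.val + 1)) ⊆
      (Finset.univ : Finset (Fin m)).filter (fun i => i.val < k - 1) := by
    intro i hi
    simp only [Finset.mem_filter] at hi ⊢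
    refine ⟨Finset.mem_univ _, ?_⟩
    by_contra hge
    push_neg at hge
    have : f (i.val + 1) ≤ f k := hf k (i.val + 1) h1 (by omega) (by omega)
    omega
  have := Finset.card_le_card hsub
  rw [card_filter_val_lt (by omega)] at this
  omega

/-- greedy split function -/
def k1f (b1 : ℕ → ℕ) : ℕ → ℕ
  | 0 => 0
  | K + 1 => min (b1 (K + 1)) (k1f b1 K + 1)

lemma k1f_invariant (b0 b1 : ℕ → ℕ) (C2 : ℕ)
    (hb01 : ∀ K, b0 K ≤ b1 K)
    (hmono0 : ∀ K K', K ≤ K' → K' ≤ C2 → b0 K ≤ b0 K')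
    (hmono1 : ∀ K K', K ≤ K' → K' ≤ C2 → b1 K ≤ b1 K')
    (hsum : ∀ K, 1 ≤ K → K ≤ C2 → K ≤ b0 K + b1 K) :
    ∀ K, K ≤ C2 → k1f b1 K ≤ K ∧ K - k1f b1 K ≤ k1f b1 K ∧ k1f b1 K ≤ b1 K ∧
      K - k1f b1 K ≤ b0 K := by
  intro K
  induction K with
  | zero => intro _; simp [k1f]
  | succ K ih =>
    intro hK
    obtain ⟨h1, h2, h3, h4⟩ := ih (by omega)
    have hle : k1f b1 (K + 1) = min (b1 (K + 1)) (k1f b1 K + 1) := rfl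
    have hb1m : b1 K ≤ b1 (K + 1) := hmono1 K (K + 1) (by omega) hK
    have hb0m : b0 K ≤ b0 (K + 1) := hmono0 K (K + 1) (by omega) hK
    have hKs : K + 1 ≤ b0 (K + 1) + b1 (K + 1) := hsum (K + 1) (by omega) hK
    have hb01' := hb01 (K + 1)
    rcases Nat.le_total (b1 (K + 1)) (k1f b1 K + 1) with hc | hc
    · -- k1f (K+1) = b1 (K+1)
      have heq : k1f b1 (K + 1) = b1 (K + 1) := by rw [hle]; omega
      refine ⟨?_, ?_, ?_, ?_⟩ <;> omega
    · have heq : k1f b1 (K + 1) = k1f b1 K + 1 := by rw [hle]; omega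
      refine ⟨?_, ?_, ?_, ?_⟩ <;> omega

lemma k1f_mono_step (b0 b1 : ℕ → ℕ) (C2 : ℕ)
    (hb01 : ∀ K, b0 K ≤ b1 K)
    (hmono0 : ∀ K K', K ≤ K' → K' ≤ C2 → b0 K ≤ b0 K')
    (hmono1 : ∀ K K', K ≤ K' → K' ≤ C2 → b1 K ≤ b1 K')
    (hsum : ∀ K, 1 ≤ K → K ≤ C2 → K ≤ b0 K + b1 K) :
    ∀ K, K + 1 ≤ C2 → k1f b1 K ≤ k1f b1 (K + 1) ∧
      K - k1f b1 K ≤ (K + 1) - k1f b1 (K + 1) := by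
  intro K hK
  obtain ⟨h1, h2, h3, h4⟩ := k1f_invariant b0 b1 C2 hb01 hmono0 hmono1 hsum K (by omega)
  have hb1m : b1 K ≤ b1 (K + 1) := hmono1 K (K + 1) (by omega) hK
  have hle : k1f b1 (K + 1) = min (b1 (K + 1)) (k1f b1 K + 1) := rfl
  constructor <;> omega

/-- pouring -/
def pour (lo hi : ℕ → ℕ) (E : ℕ) (k : ℕ) : ℕ :=
  lo k + min (hi k - lo k) (E - ∑ k' ∈ Finset.range k, (hi k' - lo k'))

lemma pour_min_sum (lo hi : ℕ → ℕ) (E : ℕ) :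
    ∀ m, ∑ k ∈ Finset.range m, min (hi k - lo k) (E - ∑ k' ∈ Finset.range k, (hi k' - lo k'))
      = min E (∑ k ∈ Finset.range m, (hi k - lo k)) := by
  intro m
  induction m with
  | zero => simp
  | succ m ih =>
    rw [Finset.sum_range_succ, ih, Finset.sum_range_succ]
    rcases Nat.le_total E (∑ k ∈ Finset.range m, (hi k - lo k)) with h | h
    · rcases Nat.le_total (hi m - lo m) (E - ∑ k' ∈ Finset.range m, (hi k' - lo k')) with h2 | h2 <;> omega
    · rcases Nat.le_total (hi m - lo m) (E - ∑ k' ∈ Finset.range m, (hi k' - lo k')) with h2 | h2 <;> omega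

lemma pour_sum (lo hi : ℕ → ℕ) (E m : ℕ)
    (hE : E ≤ ∑ k ∈ Finset.range m, (hi k - lo k)) :
    ∑ k ∈ Finset.range m, pour lo hi E k = (∑ k ∈ Finset.range m, lo k) + E := by
  unfold pour
  rw [Finset.sum_add_distrib, pour_min_sum]
  omega

lemma pour_le_hi (lo hi : ℕ → ℕ) (E k : ℕ) (h : lo k ≤ hi k) : pour lo hi E k ≤ hi k := by
  unfold pour
  have := Nat.min_le_left (hi k - lo k) (E - ∑ k' ∈ Finset.range k, (hi k' - lo k'))
  omega

lemma lo_le_pour (lo hi : ℕ → ℕ) (E k : ℕ) : lo k ≤ pour lo hi E k := by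
  unfold pour; omega

lemma pour_antitone (lo hi : ℕ → ℕ) (E k : ℕ)
    (hlo : lo (k + 1) ≤ lo k) (hhi : hi (k + 1) ≤ hi k) (hk : lo k ≤ hi k) :
    pour lo hi E (k + 1) ≤ pour lo hi E k := by
  unfold pour
  rw [Finset.sum_range_succ]
  set D := ∑ k' ∈ Finset.range k, (hi k' - lo k') with hD
  rcases Nat.le_total (hi k - lo k) (E - D) with h | h
  · -- pour k = hi k
    have h2 := Nat.min_le_left (hi (k + 1) - lo (k + 1)) (E - (D + (hi k - lo k)))
    omega
  · -- E - (D + (hi k - lo k)) = 0 when E ≤ D + (hi k - lo k)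
    have : E - (D + (hi k - lo k)) = 0 := by omega
    rw [this]
    simp
    omega


section HELPERS

lemma two_pow_succ (n : ℕ) : 2 ^ (n + 1) = 2 * 2 ^ n := by rw [pow_succ, Nat.mul_comm]

lemma e_apply_divmod {m n : ℕ} (y : Fin (m * n)) :
    finProdFinEquiv (y.divNat, y.modNat) = y := by
  have : (y.divNat, y.modNat) = finProdFinEquiv.symm y := rfl
  rw [this, Equiv.apply_symm_apply]

/-- embedding of block `c` at level `n+1` -/
def emb (n : ℕ) (c : Fin 2) (b : Fin (2 ^ n)) : Fin (2 ^ (n + 1)) :=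
  (finCongr (two_pow_succ n)).symm (finProdFinEquiv (c, b))

lemma emb_inj {n : ℕ} {c c' : Fin 2} {b b' : Fin (2 ^ n)} (h : emb n c b = emb n c' b') :
    c = c' ∧ b = b' := by
  unfold emb at h
  have h2 := (finCongr (two_pow_succ n)).symm.injective h
  have h3 := finProdFinEquiv.injective h2
  exact ⟨congrArg Prod.fst h3, congrArg Prod.snd h3⟩

lemma emb_surj {n : ℕ} (x : Fin (2 ^ (n + 1))) :
    emb n (finCongr (two_pow_succ n) x).divNat (finCongr (two_pow_succ n) x).modNat = x := by
  unfold emb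
  rw [e_apply_divmod, Equiv.symm_apply_apply]

lemma T2pow_succ_sub (n : ℕ) :
    T2pow (n + 1) = (kron T2 (T2pow n)).submatrix
      (⇑(finCongr (two_pow_succ n))) (⇑(finCongr (two_pow_succ n))) := rfl

lemma wt_T2pow_succ (n : ℕ) (u : Fin (2 ^ (n + 1)) → F2) :
    hammingNorm (Matrix.vecMul u (T2pow (n + 1))) =
      hammingNorm (Matrix.vecMul (fun b => u (emb n 0 b) + u (emb n 1 b)) (T2pow n)) +
      hammingNorm (Matrix.vecMul (fun b => u (emb n 1 b)) (T2pow n)) := by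
  rw [T2pow_succ_sub, wt_vecMul_submatrix, wt_T2_kron]
  rfl

lemma card_filter_prod {a b : ℕ} (q : Fin a × Fin b → Prop) [DecidablePred q] :
    (Finset.univ.filter q).card = ∑ c : Fin a, (Finset.univ.filter (fun d => q (c, d))).card := by
  classical
  rw [Finset.card_filter, Fintype.sum_prod_type]
  congr 1
  funext c
  rw [Finset.card_filter]

lemma card_eq_sum_emb {m n : ℕ} (I : Finset (Fin (m * n))) :
    I.card = ∑ c : Fin m, (Finset.univ.filter (fun b => finProdFinEquiv (c, b) ∈ I)).card := by
  classical
  rw [← card_filter_prod (fun cd : Fin m × Fin n => finProdFinEquiv cd ∈ I)]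
  have : I = (Finset.univ.filter (fun cd : Fin m × Fin n => finProdFinEquiv cd ∈ I)).image
      (fun cd => finProdFinEquiv cd) := by
    ext x
    simp only [Finset.mem_image, Finset.mem_filter, Finset.mem_univ, true_and]
    constructor
    · intro hx
      exact ⟨finProdFinEquiv.symm x, by rw [Equiv.apply_symm_apply]; exact hx,
        by rw [Equiv.apply_symm_apply]⟩
    · rintro ⟨cd, hcd, rfl⟩
      exact hcd
  conv_lhs => rw [this]
  rw [Finset.card_image_of_injective _ finProdFinEquiv.injective]

end HELPERS
section CHAIN

lemma fin2cases (c : Fin 2) : c = 0 ∨ c = 1 := by omega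

lemma charTwo_add_eq_zero {x y : F2} (h : x + y = 0) : x = y := by
  have h2 : x = -y := by rwa [add_eq_zero_iff_eq_neg] at h
  rw [h2, CharTwo.neg_eq]

theorem chainLemma (n : ℕ) : ∃ C : ℕ → Finset (Fin (2 ^ n)),
    (∀ k l, k ≤ l → l ≤ 2 ^ n → C k ⊆ C l) ∧ (∀ k, k ≤ 2 ^ n → (C k).card = k) ∧
    (∀ K, 1 ≤ K → K ≤ 2 ^ n → ∀ u : Fin (2 ^ n) → F2, u ≠ 0 →
      (∀ i, u i ≠ 0 → i ∈ C K) →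
      spec (T2pow n) K ≤ hammingNorm (Matrix.vecMul u (T2pow n))) := by
  induction n with
  | zero =>
    refine ⟨fun k => if k = 0 then ∅ else Finset.univ, ?_, ?_, ?_⟩
    · intro k l hkl hl
      by_cases hk : k = 0
      · simp [hk]
      · have hl0 : l ≠ 0 := by omega
        simp [hk, hl0]
    · intro k hk
      norm_num at hk
      interval_cases k <;> simp
    · intro K h1 h2 u hu hsupp
      norm_num at h2
      have hK : K = 1 := by omega
      subst hK
      have hone : Matrix.vecMul u (T2pow 0) = u := by
        rw [show T2pow 0 = 1 from rfl, Matrix.vecMul_one]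
      rw [hone]
      have hw : 1 ≤ hammingNorm u := hammingNorm_pos_iff.mpr hu
      have hs : spec (T2pow 0) 1 ≤ 1 := spec_le_N (by norm_num)
      omega
  | succ n ih =>
    classical
    obtain ⟨C, hCmono, hCcard, hCbound⟩ := ih
    set merged : Multiset ℕ :=
      (Finset.univ.val.map (fun i : Fin (2 ^ n) => spec (T2pow n) (i.val + 1))) +
      (Finset.univ.val.map (fun i : Fin (2 ^ n) => 2 * spec (T2pow n) (i.val + 1)))
      with hmerged
    have hcardm : Multiset.card merged = 2 ^ (n + 1) := by
      rw [hmerged, Multiset.card_add, Multiset.card_map, Multiset.card_map]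
      have : Multiset.card (Finset.univ : Finset (Fin (2 ^ n))).val = 2 ^ n := by
        rw [← Finset.card_def, Finset.card_univ, Fintype.card_fin]
      rw [this, two_pow_succ]
      omega
    set τ : ℕ → ℕ := fun K => kthLargest merged K with hτ
    have hτanti : ∀ K K', K ≤ K' → K' ≤ 2 ^ (n + 1) → τ K' ≤ τ K := by
      intro K K' h hK'
      rcases Nat.eq_zero_or_pos K with rfl | hpos
      · rcases Nat.eq_zero_or_pos K' with rfl | hpos'
        · exact le_rfl
        · have h01 : τ 0 = τ 1 := rfl
          rw [h01]
          exact kthLargest_antitone le_rfl hpos' (hcardm ▸ hK')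
      · exact kthLargest_antitone hpos h (hcardm ▸ hK')
    have hcount : ∀ t : ℕ, Multiset.card (merged.filter (fun x => t ≤ x)) =
        (Finset.univ.filter (fun i : Fin (2 ^ n) => t ≤ spec (T2pow n) (i.val + 1))).card +
        (Finset.univ.filter (fun i : Fin (2 ^ n) => t ≤ 2 * spec (T2pow n) (i.val + 1))).card := by
      intro t
      rw [hmerged, Multiset.filter_add, Multiset.card_add]
      congr 1
      · rw [← Multiset.countP_eq_card_filter, Multiset.countP_map,
          ← Finset.filter_val]
        rfl
      · rw [← Multiset.countP_eq_card_filter, Multiset.countP_map,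
          ← Finset.filter_val]
        rfl
    set b0 : ℕ → ℕ := fun K =>
      (Finset.univ.filter (fun i : Fin (2 ^ n) => τ K ≤ spec (T2pow n) (i.val + 1))).card with hb0
    set b1 : ℕ → ℕ := fun K =>
      (Finset.univ.filter (fun i : Fin (2 ^ n) => τ K ≤ 2 * spec (T2pow n) (i.val + 1))).card
      with hb1
    have hb01 : ∀ K, b0 K ≤ b1 K := by
      intro K
      apply Finset.card_le_card
      intro i hi
      simp only [Finset.mem_filter, Finset.mem_univ, true_and] at hi ⊢
      omega
    have hmono0 : ∀ K K', K ≤ K' → K' ≤ 2 ^ (n + 1) → b0 K ≤ b0 K' := by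
      intro K K' h hK'
      apply Finset.card_le_card
      intro i hi
      simp only [Finset.mem_filter, Finset.mem_univ, true_and] at hi ⊢
      exact le_trans (hτanti K K' h hK') hi
    have hmono1 : ∀ K K', K ≤ K' → K' ≤ 2 ^ (n + 1) → b1 K ≤ b1 K' := by
      intro K K' h hK'
      apply Finset.card_le_card
      intro i hi
      simp only [Finset.mem_filter, Finset.mem_univ, true_and] at hi ⊢
      exact le_trans (hτanti K K' h hK') hi
    have hb1le : ∀ K, b1 K ≤ 2 ^ n := by
      intro K
      calc b1 K ≤ (Finset.univ : Finset (Fin (2 ^ n))).card := Finset.card_filter_le _ _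
      _ = 2 ^ n := by rw [Finset.card_univ, Fintype.card_fin]
    have hsum : ∀ K, 1 ≤ K → K ≤ 2 ^ (n + 1) → K ≤ b0 K + b1 K := by
      intro K h1 h2
      have := count_ge_kth (s := merged) h1 (hcardm ▸ h2)
      rw [hcount] at this
      exact this
    have hinv := k1f_invariant b0 b1 (2 ^ (n + 1)) hb01 hmono0 hmono1 hsum
    have hstep := k1f_mono_step b0 b1 (2 ^ (n + 1)) hb01 hmono0 hmono1 hsum
    have haseq : ∀ i j, 1 ≤ i → i ≤ j → j ≤ 2 ^ n → spec (T2pow n) j ≤ spec (T2pow n) i := by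
      intro i j hi hij hj
      exact spec_anti hi hij (by simpa using hj)
    have hk1le : ∀ K, K ≤ 2 ^ (n + 1) → k1f b1 K ≤ 2 ^ n := by
      intro K hK
      exact le_trans (hinv K hK).2.2.1 (hb1le K)
    have hk0le : ∀ K, K ≤ 2 ^ (n + 1) → K - k1f b1 K ≤ 2 ^ n := by
      intro K hK
      exact le_trans (hinv K hK).2.1 (hk1le K hK)
    have hthresh1 : ∀ K, K ≤ 2 ^ (n + 1) → 1 ≤ k1f b1 K →
        τ K ≤ 2 * spec (T2pow n) (k1f b1 K) := by
      intro K hK h1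
      refine count_thresh (fun k => 2 * spec (T2pow n) k) ?_ h1 (hk1le K hK) ?_
      · intro i j hi hij hj
        have := haseq i j hi hij hj
        show 2 * spec (T2pow n) j ≤ 2 * spec (T2pow n) i
        omega
      · exact (hinv K hK).2.2.1
    have hthresh0 : ∀ K, K ≤ 2 ^ (n + 1) → 1 ≤ K - k1f b1 K →
        τ K ≤ spec (T2pow n) (K - k1f b1 K) := by
      intro K hK h1
      refine count_thresh (fun k => spec (T2pow n) k) haseq h1 (hk0le K hK) ?_
      exact (hinv K hK).2.2.2
    -- converse: spec at level n+1 is at most τ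
    have hconv : ∀ K, 1 ≤ K → K ≤ 2 ^ (n + 1) → spec (T2pow (n + 1)) K ≤ τ K := by
      intro K h1 hK
      obtain ⟨I, hcard, hmd⟩ := exists_spec (G := T2pow (n + 1)) (K := K) (by simpa using hK)
      set I0 : Finset (Fin (2 ^ n)) :=
        Finset.univ.filter (fun b => emb n 0 b ∈ I) with hI0
      set I1 : Finset (Fin (2 ^ n)) :=
        Finset.univ.filter (fun b => emb n 1 b ∈ I) with hI1
      have hsplitc : I0.card + I1.card = K := by
        rw [← hcard]
        have h1' : I.card = (I.image (finCongr (two_pow_succ n))).card :=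
          (Finset.card_image_of_injective _ (finCongr (two_pow_succ n)).injective).symm
        rw [h1', card_eq_sum_emb (I.image (finCongr (two_pow_succ n))), Fin.sum_univ_two]
        have hmem : ∀ (c : Fin 2) (b : Fin (2 ^ n)),
            finProdFinEquiv (c, b) ∈ I.image (finCongr (two_pow_succ n)) ↔ emb n c b ∈ I := by
          intro c b
          simp only [Finset.mem_image]
          constructor
          · rintro ⟨y, hy, hxy⟩
            have : y = emb n c b := by
              rw [emb, ← hxy]
              exact (Equiv.symm_apply_apply _ _).symm
            rwa [← this]
          · intro h
            exact ⟨emb n c b, h, by rw [emb, Equiv.apply_symm_apply]⟩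
        rw [hI0, hI1]
        congr 1
        · apply Finset.card_bij' (fun b _ => b) (fun b _ => b) <;>
            (intro b hb; simp only [Finset.mem_filter, Finset.mem_univ, true_and, hmem] at hb ⊢) <;>
            first | exact hb | rfl
        · apply Finset.card_bij' (fun b _ => b) (fun b _ => b) <;>
            (intro b hb; simp only [Finset.mem_filter, Finset.mem_univ, true_and, hmem] at hb ⊢) <;>
            first | exact hb | rfl
      have hI0sub : ∀ b, b ∈ I0 → emb n 0 b ∈ I := by
        intro b hb; rw [hI0] at hb
        simpa using (Finset.mem_filter.mp hb).2
      have hI1sub : ∀ b, b ∈ I1 → emb n 1 b ∈ I := by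
        intro b hb; rw [hI1] at hb
        simpa using (Finset.mem_filter.mp hb).2
      -- bounds via test vectors
      have hb0case : 1 ≤ I0.card → minDist (T2pow (n + 1)) I ≤ spec (T2pow n) I0.card := by
        intro h
        have hne : I0.Nonempty := Finset.card_pos.mp (by omega)
        obtain ⟨u0, hu0, hs0, hw0⟩ := exists_minDist (G := T2pow n) hne
        set u : Fin (2 ^ (n + 1)) → F2 := fun x =>
          if (finCongr (two_pow_succ n) x).divNat = 0 then
            u0 ((finCongr (two_pow_succ n) x).modNat) else 0 with hudef
        have hemb : ∀ (c : Fin 2) (b : Fin (2 ^ n)),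
            u (emb n c b) = if c = 0 then u0 b else 0 := by
          intro c b
          rw [hudef]
          simp only [emb, Equiv.apply_symm_apply, e_divNat, e_modNat]
        have hwt : hammingNorm (Matrix.vecMul u (T2pow (n + 1))) = minDist (T2pow n) I0 := by
          rw [wt_T2pow_succ]
          have hblock1 : (fun b => u (emb n 1 b)) = (0 : Fin (2 ^ n) → F2) := by
            funext b; rw [hemb]; norm_num
          have hblock0 : (fun b => u (emb n 0 b) + u (emb n 1 b)) = u0 := by
            funext b; rw [hemb, hemb]; norm_num
          rw [hblock0, hblock1, Matrix.zero_vecMul, hammingNorm_zero, hw0, Nat.add_zero]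
        have hune : u ≠ 0 := by
          obtain ⟨b, hb⟩ := Function.ne_iff.mp hu0
          intro h0
          have := congrFun h0 (emb n 0 b)
          rw [hemb] at this
          simp at this
          exact hb this
        have hsupp' : ∀ x, u x ≠ 0 → x ∈ I := by
          intro x hx
          simp only [hudef] at hx
          by_cases hdiv : (finCongr (two_pow_succ n) x).divNat = 0
          · rw [if_pos hdiv] at hx
            have hbmem : (finCongr (two_pow_succ n) x).modNat ∈ I0 := hs0 _ hx
            have := hI0sub _ hbmem
            rw [← hdiv] at this
            rwa [emb_surj] at this
          · rw [if_neg hdiv] at hx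
            exact absurd rfl hx
        calc minDist (T2pow (n + 1)) I
            ≤ hammingNorm (Matrix.vecMul u (T2pow (n + 1))) := minDist_le hune hsupp'
        _ = minDist (T2pow n) I0 := hwt
        _ ≤ spec (T2pow n) I0.card := le_spec rfl
      have hb1case : 1 ≤ I1.card → minDist (T2pow (n + 1)) I ≤ 2 * spec (T2pow n) I1.card := by
        intro h
        have hne : I1.Nonempty := Finset.card_pos.mp (by omega)
        obtain ⟨u1, hu1, hs1, hw1⟩ := exists_minDist (G := T2pow n) hne
        set u : Fin (2 ^ (n + 1)) → F2 := fun x =>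
          if (finCongr (two_pow_succ n) x).divNat = 1 then
            u1 ((finCongr (two_pow_succ n) x).modNat) else 0 with hudef
        have hemb : ∀ (c : Fin 2) (b : Fin (2 ^ n)),
            u (emb n c b) = if c = 1 then u1 b else 0 := by
          intro c b
          rw [hudef]
          simp only [emb, Equiv.apply_symm_apply, e_divNat, e_modNat]
        have hwt : hammingNorm (Matrix.vecMul u (T2pow (n + 1))) =
            2 * hammingNorm (Matrix.vecMul u1 (T2pow n)) := by
          rw [wt_T2pow_succ]
          have hblock1 : (fun b => u (emb n 1 b)) = u1 := by
            funext b; rw [hemb]; norm_num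
          have hblock0 : (fun b => u (emb n 0 b) + u (emb n 1 b)) = u1 := by
            funext b; rw [hemb, hemb]; norm_num
          rw [hblock0, hblock1]
          omega
        have hune : u ≠ 0 := by
          obtain ⟨b, hb⟩ := Function.ne_iff.mp hu1
          intro h0
          have := congrFun h0 (emb n 1 b)
          rw [hemb] at this
          simp at this
          exact hb this
        have hsupp' : ∀ x, u x ≠ 0 → x ∈ I := by
          intro x hx
          simp only [hudef] at hx
          by_cases hdiv : (finCongr (two_pow_succ n) x).divNat = 1
          · rw [if_pos hdiv] at hx
            have hbmem : (finCongr (two_pow_succ n) x).modNat ∈ I1 := hs1 _ hx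
            have := hI1sub _ hbmem
            rw [← hdiv] at this
            rwa [emb_surj] at this
          · rw [if_neg hdiv] at hx
            exact absurd rfl hx
        have hlesp : minDist (T2pow n) I1 ≤ spec (T2pow n) I1.card := le_spec rfl
        calc minDist (T2pow (n + 1)) I
            ≤ hammingNorm (Matrix.vecMul u (T2pow (n + 1))) := minDist_le hune hsupp'
        _ = 2 * hammingNorm (Matrix.vecMul u1 (T2pow n)) := hwt
        _ = 2 * minDist (T2pow n) I1 := by rw [hw1]
        _ ≤ 2 * spec (T2pow n) I1.card := by omega
      -- now conclude spec ≤ τ via counting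
      rw [hτ]
      apply le_kthLargest_of_count h1
      rw [hcount]
      have hI0le : I0.card ≤ (Finset.univ.filter
          (fun i : Fin (2 ^ n) => spec (T2pow (n + 1)) K ≤ spec (T2pow n) (i.val + 1))).card := by
        rcases Nat.eq_zero_or_pos I0.card with h0 | hpos
        · omega
        · have hspecle : spec (T2pow (n + 1)) K ≤ spec (T2pow n) I0.card := by
            rw [← hmd]; exact hb0case hpos
          have hsub : Finset.univ.filter (fun i : Fin (2 ^ n) => i.val < I0.card) ⊆
              Finset.univ.filter
              (fun i : Fin (2 ^ n) => spec (T2pow (n + 1)) K ≤ spec (T2pow n) (i.val + 1)) := by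
            intro i hi
            simp only [Finset.mem_filter, Finset.mem_univ, true_and] at hi ⊢
            refine le_trans hspecle (haseq (i.val + 1) I0.card (by omega) (by omega) ?_)
            calc I0.card ≤ (Finset.univ : Finset (Fin (2 ^ n))).card := by
                  rw [hI0]; exact Finset.card_filter_le _ _
            _ = 2 ^ n := by rw [Finset.card_univ, Fintype.card_fin]
          have := Finset.card_le_card hsub
          rwa [card_filter_val_lt (by
            calc I0.card ≤ (Finset.univ : Finset (Fin (2 ^ n))).card := by
                  rw [hI0]; exact Finset.card_filter_le _ _
            _ = 2 ^ n := by rw [Finset.card_univ, Fintype.card_fin])] at this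
      have hI1le : I1.card ≤ (Finset.univ.filter
          (fun i : Fin (2 ^ n) => spec (T2pow (n + 1)) K ≤ 2 * spec (T2pow n) (i.val + 1))).card := by
        rcases Nat.eq_zero_or_pos I1.card with h0 | hpos
        · omega
        · have hspecle : spec (T2pow (n + 1)) K ≤ 2 * spec (T2pow n) I1.card := by
            rw [← hmd]; exact hb1case hpos
          have hsub : Finset.univ.filter (fun i : Fin (2 ^ n) => i.val < I1.card) ⊆
              Finset.univ.filter
              (fun i : Fin (2 ^ n) => spec (T2pow (n + 1)) K ≤ 2 * spec (T2pow n) (i.val + 1)) := by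
            intro i hi
            simp only [Finset.mem_filter, Finset.mem_univ, true_and] at hi ⊢
            have hi1 : spec (T2pow n) I1.card ≤ spec (T2pow n) (i.val + 1) := by
              refine haseq (i.val + 1) I1.card (by omega) (by omega) ?_
              calc I1.card ≤ (Finset.univ : Finset (Fin (2 ^ n))).card := by
                    rw [hI1]; exact Finset.card_filter_le _ _
              _ = 2 ^ n := by rw [Finset.card_univ, Fintype.card_fin]
            omega
          have := Finset.card_le_card hsub
          rwa [card_filter_val_lt (by
            calc I1.card ≤ (Finset.univ : Finset (Fin (2 ^ n))).card := by
                  rw [hI1]; exact Finset.card_filter_le _ _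
            _ = 2 ^ n := by rw [Finset.card_univ, Fintype.card_fin])] at this
      omega
    -- monotone splits
    have hk1mono : ∀ k l, k ≤ l → l ≤ 2 ^ (n + 1) →
        k1f b1 k ≤ k1f b1 l ∧ k - k1f b1 k ≤ l - k1f b1 l := by
      intro k l hkl hl
      induction l, hkl using Nat.le_induction with
      | base => exact ⟨le_rfl, le_rfl⟩
      | succ l hkl ihl =>
        obtain ⟨ha, hb⟩ := ihl (by omega)
        obtain ⟨hc, hd⟩ := hstep l (by omega)
        exact ⟨le_trans ha hc, le_trans hb hd⟩
    -- the new chain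
    set C' : ℕ → Finset (Fin (2 ^ (n + 1))) := fun K =>
      ((C (K - k1f b1 K)).image (emb n 0)) ∪ ((C (k1f b1 K)).image (emb n 1)) with hC'
    have hmemC' : ∀ K (c : Fin 2) (b : Fin (2 ^ n)), emb n c b ∈ C' K ↔
        (c = 0 ∧ b ∈ C (K - k1f b1 K)) ∨ (c = 1 ∧ b ∈ C (k1f b1 K)) := by
      intro K c b
      rw [hC']
      simp only [Finset.mem_union, Finset.mem_image]
      constructor
      · rintro (⟨b', hb', heq⟩ | ⟨b', hb', heq⟩)
        · obtain ⟨hc, hb⟩ := emb_inj heq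
          exact Or.inl ⟨hc.symm, by rwa [← hb]⟩
        · obtain ⟨hc, hb⟩ := emb_inj heq
          exact Or.inr ⟨hc.symm, by rwa [← hb]⟩
      · rintro (⟨rfl, hb⟩ | ⟨rfl, hb⟩)
        · exact Or.inl ⟨b, hb, rfl⟩
        · exact Or.inr ⟨b, hb, rfl⟩
    refine ⟨C', ?_, ?_, ?_⟩
    · -- monotone
      intro k l hkl hl
      obtain ⟨h1, h2⟩ := hk1mono k l hkl hl
      rw [hC']
      apply Finset.union_subset_union
      · exact Finset.image_subset_image (hCmono _ _ h2 (hk0le l hl))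
      · exact Finset.image_subset_image (hCmono _ _ h1 (hk1le l hl))
    · -- card
      intro K hK
      rw [hC']
      have hdisj : Disjoint ((C (K - k1f b1 K)).image (emb n 0))
          ((C (k1f b1 K)).image (emb n 1)) := by
        rw [Finset.disjoint_left]
        intro x hx0 hx1
        simp only [Finset.mem_image] at hx0 hx1
        obtain ⟨b, _, rfl⟩ := hx0
        obtain ⟨b', _, heq⟩ := hx1
        obtain ⟨hc, -⟩ := emb_inj heq
        exact absurd hc (by norm_num)
      rw [Finset.card_union_of_disjoint hdisj,
        Finset.card_image_of_injective _ (fun b b' h => (emb_inj h).2),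
        Finset.card_image_of_injective _ (fun b b' h => (emb_inj h).2),
        hCcard _ (hk0le K hK), hCcard _ (hk1le K hK)]
      have := (hinv K hK).1
      omega
    · -- the bound
      intro K h1 hK u hu hsupp
      have hspecτ : spec (T2pow (n + 1)) K ≤ τ K := hconv K h1 hK
      rw [wt_T2pow_succ]
      have hu0supp : ∀ b, u (emb n 0 b) ≠ 0 → b ∈ C (K - k1f b1 K) := by
        intro b hb
        have := hsupp _ hb
        rcases (hmemC' K 0 b).mp this with ⟨-, h⟩ | ⟨h0, -⟩
        · exact h
        · exact absurd h0 (by norm_num)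
      have hu1supp : ∀ b, u (emb n 1 b) ≠ 0 → b ∈ C (k1f b1 K) := by
        intro b hb
        have := hsupp _ hb
        rcases (hmemC' K 1 b).mp this with ⟨h0, -⟩ | ⟨-, h⟩
        · exact absurd h0 (by norm_num)
        · exact h
      have hk0card : (C (K - k1f b1 K)).card = K - k1f b1 K := hCcard _ (hk0le K hK)
      have hk1card : (C (k1f b1 K)).card = k1f b1 K := hCcard _ (hk1le K hK)
      by_cases hv1 : (fun b => u (emb n 1 b)) = (0 : Fin (2 ^ n) → F2)
      · -- bottom block zero
        have hw0eq : (fun b => u (emb n 0 b) + u (emb n 1 b)) = (fun b => u (emb n 0 b)) := by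
          funext b
          rw [congrFun hv1 b]
          simp
        have hw0ne : (fun b => u (emb n 0 b)) ≠ (0 : Fin (2 ^ n) → F2) := by
          obtain ⟨x, hx⟩ := Function.ne_iff.mp hu
          rw [← emb_surj (n := n) x] at hx
          rcases fin2cases ((finCongr (two_pow_succ n) x).divNat) with hc | hc
          · rw [hc] at hx
            exact Function.ne_iff.mpr ⟨_, hx⟩
          · rw [hc] at hx
            exact absurd (congrFun hv1 _) hx
        have hk0pos : 1 ≤ K - k1f b1 K := by
          by_contra h0
          push_neg at h0
          have hz : K - k1f b1 K = 0 := by omega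
          have : C (K - k1f b1 K) = ∅ := Finset.card_eq_zero.mp (by rw [hk0card, hz])
          obtain ⟨b, hb⟩ := Function.ne_iff.mp hw0ne
          have := hu0supp b hb
          rw [‹C (K - k1f b1 K) = ∅›] at this
          simp at this
        have hbnd := hCbound (K - k1f b1 K) hk0pos (hk0le K hK) _ hw0ne hu0supp
        have hτ0 := hthresh0 K hK hk0pos
        rw [hw0eq]
        have hzero : hammingNorm (Matrix.vecMul (fun b => u (emb n 1 b)) (T2pow n)) = 0 := by
          rw [hv1, Matrix.zero_vecMul, hammingNorm_zero]
        omega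
      · -- bottom block nonzero
        have hk1pos : 1 ≤ k1f b1 K := by
          by_contra h0
          push_neg at h0
          have hz : k1f b1 K = 0 := by omega
          have : C (k1f b1 K) = ∅ := Finset.card_eq_zero.mp (by rw [hk1card, hz])
          obtain ⟨b, hb⟩ := Function.ne_iff.mp hv1
          have := hu1supp b hb
          rw [‹C (k1f b1 K) = ∅›] at this
          simp at this
        by_cases hw0 : (fun b => u (emb n 0 b) + u (emb n 1 b)) = (0 : Fin (2 ^ n) → F2)
        · -- blocks are equal; v1 supported in C k0
          have hv1supp' : ∀ b, u (emb n 1 b) ≠ 0 → b ∈ C (K - k1f b1 K) := by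
            intro b hb
            have heq : u (emb n 0 b) = u (emb n 1 b) := charTwo_add_eq_zero (congrFun hw0 b)
            exact hu0supp b (by rw [heq]; exact hb)
          have hk0pos : 1 ≤ K - k1f b1 K := by
            by_contra h0
            push_neg at h0
            have hz : K - k1f b1 K = 0 := by omega
            have : C (K - k1f b1 K) = ∅ := Finset.card_eq_zero.mp (by rw [hk0card, hz])
            obtain ⟨b, hb⟩ := Function.ne_iff.mp hv1
            have := hv1supp' b hb
            rw [‹C (K - k1f b1 K) = ∅›] at this
            simp at this
          have hbnd := hCbound (K - k1f b1 K) hk0pos (hk0le K hK) _ hv1 hv1supp'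
          have hτ0 := hthresh0 K hK hk0pos
          have hzero : hammingNorm (Matrix.vecMul
              (fun b => u (emb n 0 b) + u (emb n 1 b)) (T2pow n)) = 0 := by
            rw [hw0, Matrix.zero_vecMul, hammingNorm_zero]
          omega
        · -- both nonzero
          have hw0supp : ∀ b, (u (emb n 0 b) + u (emb n 1 b)) ≠ 0 → b ∈ C (k1f b1 K) := by
            intro b hb
            by_cases h0 : u (emb n 0 b) = 0
            · by_cases h1' : u (emb n 1 b) = 0
              · rw [h0, h1'] at hb; simp at hb
              · exact hu1supp b h1'
            · have hb0 := hu0supp b h0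
              have hsub := hCmono (K - k1f b1 K) (k1f b1 K) (hinv K hK).2.1 (hk1le K hK)
              exact hsub hb0
          have hbnd0 := hCbound (k1f b1 K) hk1pos (hk1le K hK) _ hw0 hw0supp
          have hbnd1 := hCbound (k1f b1 K) hk1pos (hk1le K hK) _ hv1 hu1supp
          have hτ1 := hthresh1 K hK hk1pos
          omega

end CHAIN
theorem exists_info_set_achieving_kron_spectrum
    (p : ℕ) (hp : 1 ≤ p) (Tp : Matrix (Fin p) (Fin p) F2) (hTp : IsUnit Tp)
    (n : ℕ) (K : ℕ) (hK1 : 1 ≤ K) (hK2 : K ≤ 2 ^ n * p) :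
    ∃ I : Finset (Fin (2 ^ n * p)), I.card = K ∧
      kthLargest
          (((Finset.univ : Finset (Fin (2 ^ n) × Fin p)).val).map
            (fun ij => spec (T2pow n) (ij.1.val + 1) * spec Tp (ij.2.val + 1))) K ≤
        minDist (kron (T2pow n) Tp) I ∧
      ∀ u : Fin (2 ^ n * p) → F2, u ≠ 0 → (∀ i, u i ≠ 0 → i ∈ I) →
        kthLargest
            (((Finset.univ : Finset (Fin (2 ^ n) × Fin p)).val).map
              (fun ij => spec (T2pow n) (ij.1.val + 1) * spec Tp (ij.2.val + 1))) K ≤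
          hammingNorm (Matrix.vecMul u (kron (T2pow n) Tp)) := by
  classical
  obtain ⟨C, hCmono, hCcard, hCbound⟩ := chainLemma n
  set s : Multiset ℕ := ((Finset.univ : Finset (Fin (2 ^ n) × Fin p)).val).map
    (fun ij => spec (T2pow n) (ij.1.val + 1) * spec Tp (ij.2.val + 1)) with hs
  set t : ℕ := kthLargest s K with ht
  have hcards : Multiset.card s = 2 ^ n * p := by
    rw [hs, Multiset.card_map, ← Finset.card_def, Finset.card_univ, Fintype.card_prod,
      Fintype.card_fin, Fintype.card_fin]
  -- the rank function of the chain
  have hCuniv : C (2 ^ n) = Finset.univ := by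
    apply Finset.eq_univ_of_card
    rw [hCcard _ le_rfl, Fintype.card_fin]
  set ord : Fin (2 ^ n) → ℕ := fun a => sInf {k | a ∈ C k} with hord
  have hordmem : ∀ a, a ∈ C (ord a) := by
    intro a
    exact Nat.sInf_mem (⟨2 ^ n, by rw [Set.mem_setOf_eq, hCuniv]; exact Finset.mem_univ a⟩ :
      {k | a ∈ C k}.Nonempty)
  have hordle : ∀ a k, a ∈ C k → ord a ≤ k := fun a k hk => Nat.sInf_le hk
  have hordub : ∀ a, ord a ≤ 2 ^ n := by
    intro a
    exact hordle a _ (by rw [hCuniv]; exact Finset.mem_univ a)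
  have hordpos : ∀ a, 1 ≤ ord a := by
    intro a
    by_contra h0
    push_neg at h0
    have hz : ord a = 0 := by omega
    have h1 : a ∈ C 0 := hz ▸ hordmem a
    have h2 : C 0 = ∅ := Finset.card_eq_zero.mp (hCcard 0 (Nat.zero_le _))
    rw [h2] at h1
    simp at h1
  have hordinj : ∀ a b, ord a = ord b → a = b := by
    intro a b hab
    set k := ord a with hk
    have hk1 : 1 ≤ k := hordpos a
    have hkub : k ≤ 2 ^ n := hordub a
    have hma : a ∈ C k \ C (k - 1) := by
      rw [Finset.mem_sdiff]
      refine ⟨hordmem a, ?_⟩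
      intro hmem
      have := hordle a _ hmem
      omega
    have hmb : b ∈ C k \ C (k - 1) := by
      rw [Finset.mem_sdiff]
      refine ⟨hab ▸ hordmem b, ?_⟩
      intro hmem
      have := hordle b _ hmem
      omega
    have hcard : (C k \ C (k - 1)).card ≤ 1 := by
      have hsub : C (k - 1) ⊆ C k := hCmono _ _ (by omega) hkub
      rw [Finset.card_sdiff_of_subset hsub, hCcard _ hkub, hCcard _ (by omega)]
      omega
    exact Finset.card_le_one.mp hcard a hma b hmb
  -- B-side optimal sets
  have hJex : ∀ j : ℕ, j ≤ p → ∃ Jj : Finset (Fin p), Jj.card = j ∧ minDist Tp Jj = spec Tp j :=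
    fun j hj => exists_spec hj
  set J : ℕ → Finset (Fin p) := fun j =>
    if h : j ≤ p then Classical.choose (hJex j h) else ∅ with hJdef
  have hJcard : ∀ j, j ≤ p → (J j).card = j := by
    intro j hj
    rw [hJdef]
    simp only [dif_pos hj]
    exact (Classical.choose_spec (hJex j hj)).1
  have hJmd : ∀ j, j ≤ p → minDist Tp (J j) = spec Tp j := by
    intro j hj
    rw [hJdef]
    simp only [dif_pos hj]
    exact (Classical.choose_spec (hJex j hj)).2
  -- row budgets
  set hi : ℕ → ℕ := fun k => (Finset.univ.filter
    (fun j : Fin p => t ≤ spec (T2pow n) (k + 1) * spec Tp (j.val + 1))).card with hhi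
  have hhile : ∀ k, hi k ≤ p := by
    intro k
    calc hi k ≤ (Finset.univ : Finset (Fin p)).card := Finset.card_filter_le _ _
    _ = p := by rw [Finset.card_univ, Fintype.card_fin]
  have hsumhi : K ≤ ∑ k ∈ Finset.range (2 ^ n), hi k := by
    have hcg := count_ge_kth (s := s) hK1 (hcards ▸ hK2)
    rw [← ht] at hcg
    have hcount : Multiset.card (s.filter (fun x => t ≤ x)) =
        ∑ k ∈ Finset.range (2 ^ n), hi k := by
      rw [hs, ← Multiset.countP_eq_card_filter, Multiset.countP_map,
        ← Finset.filter_val]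
      show (Finset.univ.filter (fun ij : Fin (2 ^ n) × Fin p =>
        t ≤ spec (T2pow n) (ij.1.val + 1) * spec Tp (ij.2.val + 1))).card = _
      rw [card_filter_prod (fun ij : Fin (2 ^ n) × Fin p =>
        t ≤ spec (T2pow n) (ij.1.val + 1) * spec Tp (ij.2.val + 1))]
      rw [← Fin.sum_univ_eq_sum_range (fun k => hi k) (2 ^ n)]
    rw [← hcount]
    exact hcg
  set μ : ℕ → ℕ := fun k => pour (fun _ => 0) hi K k with hμ
  have hμsum : ∑ k ∈ Finset.range (2 ^ n), μ k = K := by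
    rw [hμ]
    have := pour_sum (fun _ => 0) hi K (2 ^ n) (by simpa using hsumhi)
    simpa using this
  have hμle : ∀ k, μ k ≤ hi k := by
    intro k
    rw [hμ]
    exact pour_le_hi _ _ _ _ (Nat.zero_le _)
  have hμlep : ∀ k, μ k ≤ p := fun k => le_trans (hμle k) (hhile k)
  -- the information set
  set I : Finset (Fin (2 ^ n * p)) := Finset.univ.filter
    (fun x => x.modNat ∈ J (μ (ord x.divNat - 1))) with hI
  have hImem : ∀ (a : Fin (2 ^ n)) (b : Fin p),
      finProdFinEquiv (a, b) ∈ I ↔ b ∈ J (μ (ord a - 1)) := by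
    intro a b
    rw [hI]
    simp only [Finset.mem_filter, Finset.mem_univ, true_and, e_divNat, e_modNat]
  have hIcard : I.card = K := by
    rw [card_eq_sum_emb I]
    have hterm : ∀ a : Fin (2 ^ n),
        (Finset.univ.filter (fun b => finProdFinEquiv (a, b) ∈ I)).card = μ (ord a - 1) := by
      intro a
      have : Finset.univ.filter (fun b => finProdFinEquiv (a, b) ∈ I) = J (μ (ord a - 1)) := by
        ext b
        simp only [Finset.mem_filter, Finset.mem_univ, true_and, hImem]
      rw [this, hJcard _ (hμlep _)]
    rw [Finset.sum_congr rfl (fun a _ => hterm a)]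
    -- reindex over the rank bijection
    have hinj : ∀ a ∈ (Finset.univ : Finset (Fin (2 ^ n))), ∀ b ∈ Finset.univ,
        ord a - 1 = ord b - 1 → a = b := by
      intro a _ b _ hab
      have ha := hordpos a
      have hb := hordpos b
      exact hordinj a b (by omega)
    have himg : Finset.image (fun a => ord a - 1) Finset.univ = Finset.range (2 ^ n) := by
      apply Finset.eq_of_subset_of_card_le
      · intro k hk
        simp only [Finset.mem_image] at hk
        obtain ⟨a, -, rfl⟩ := hk
        have := hordub a
        have := hordpos a
        rw [Finset.mem_range]
        omega
      · rw [Finset.card_range, Finset.card_image_of_injOn hinj, Finset.card_univ,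
          Fintype.card_fin]
    calc ∑ a : Fin (2 ^ n), μ (ord a - 1)
        = ∑ k ∈ Finset.image (fun a => ord a - 1) Finset.univ, μ k := by
          rw [Finset.sum_image hinj]
    _ = ∑ k ∈ Finset.range (2 ^ n), μ k := by rw [himg]
    _ = K := hμsum
  -- the main weight bound
  have hmain : ∀ u : Fin (2 ^ n * p) → F2, u ≠ 0 → (∀ i, u i ≠ 0 → i ∈ I) →
      t ≤ hammingNorm (Matrix.vecMul u (kron (T2pow n) Tp)) := by
    intro u hu hsupp
    rw [wt_kron_cols]
    -- row support structure
    have hrow : ∀ (a : Fin (2 ^ n)) (b : Fin p), u (finProdFinEquiv (a, b)) ≠ 0 →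
        b ∈ J (μ (ord a - 1)) := by
      intro a b hb
      exact (hImem a b).mp (hsupp _ hb)
    set aset : Finset (Fin (2 ^ n)) := Finset.univ.filter
      (fun a => (fun b => u (finProdFinEquiv (a, b))) ≠ 0) with haset
    have hasetne : aset.Nonempty := by
      obtain ⟨x, hx⟩ := Function.ne_iff.mp hu
      refine ⟨x.divNat, ?_⟩
      rw [haset, Finset.mem_filter]
      refine ⟨Finset.mem_univ _, ?_⟩
      apply Function.ne_iff.mpr
      exact ⟨x.modNat, by rw [e_apply_divmod]; exact hx⟩
    set kstar : ℕ := (aset.image ord).max' (hasetne.image ord) with hkstar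
    obtain ⟨astar, hastar, hordastar⟩ := Finset.mem_image.mp
      ((aset.image ord).max'_mem (hasetne.image ord))
    rw [← hkstar] at hordastar
    have hkub : kstar ≤ 2 ^ n := by rw [← hordastar]; exact hordub astar
    have hkpos : 1 ≤ kstar := by rw [← hordastar]; exact hordpos astar
    have hrowsub : ∀ a ∈ aset, a ∈ C kstar := by
      intro a ha
      have h1 : ord a ≤ kstar := Finset.le_max' _ _ (Finset.mem_image_of_mem ord ha)
      exact hCmono _ _ h1 hkub (hordmem a)
    -- the starred row
    have hastarne : (fun b => u (finProdFinEquiv (astar, b))) ≠ 0 := by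
      rw [haset, Finset.mem_filter] at hastar
      exact hastar.2
    have hastarsupp : ∀ b, u (finProdFinEquiv (astar, b)) ≠ 0 → b ∈ J (μ (kstar - 1)) := by
      intro b hb
      rw [← hordastar]
      exact hrow astar b hb
    have hμpos : 1 ≤ μ (kstar - 1) := by
      obtain ⟨b, hb⟩ := Function.ne_iff.mp hastarne
      have hbJ := hastarsupp b hb
      have hcard := hJcard _ (hμlep (kstar - 1))
      have : 0 < (J (μ (kstar - 1))).card := Finset.card_pos.mpr ⟨b, hbJ⟩
      omega
    -- threshold
    have hthresh : t ≤ spec (T2pow n) kstar * spec Tp (μ (kstar - 1)) := by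
      have hk1 : kstar - 1 + 1 = kstar := by omega
      have hcnt : μ (kstar - 1) ≤ (Finset.univ.filter
          (fun j : Fin p => t ≤ spec (T2pow n) kstar * spec Tp (j.val + 1))).card := by
        have := hμle (kstar - 1)
        simp only [hhi] at this
        rw [hk1] at this
        exact this
      refine count_thresh (fun j => spec (T2pow n) kstar * spec Tp j) ?_ hμpos (hμlep _) hcnt
      intro i j hi' hij hj
      exact Nat.mul_le_mul_left _ (spec_anti hi' hij (by simpa using hj))
    -- column counting
    set wcol : Fin p → Fin (2 ^ n) → F2 := fun d => fun a =>
      Matrix.vecMul (fun b => u (finProdFinEquiv (a, b))) Tp d with hwcol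
    set D : Finset (Fin p) := Finset.univ.filter (fun d => wcol d ≠ 0) with hD
    have hcolbound : ∀ d ∈ D, spec (T2pow n) kstar ≤
        hammingNorm (Matrix.vecMul (wcol d) (T2pow n)) := by
      intro d hd
      rw [hD, Finset.mem_filter] at hd
      refine hCbound kstar hkpos hkub (wcol d) hd.2 ?_
      intro a ha
      apply hrowsub
      rw [haset, Finset.mem_filter]
      refine ⟨Finset.mem_univ _, ?_⟩
      intro h0
      rw [hwcol] at ha
      simp only at ha
      rw [h0] at ha
      rw [Matrix.zero_vecMul] at ha
      exact ha rfl
    have hDcard : spec Tp (μ (kstar - 1)) ≤ D.card := by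
      have hwt : spec Tp (μ (kstar - 1)) ≤
          hammingNorm (Matrix.vecMul (fun b => u (finProdFinEquiv (astar, b))) Tp) := by
        rw [← hJmd _ (hμlep (kstar - 1))]
        exact minDist_le hastarne hastarsupp
      refine le_trans hwt ?_
      have hsub : Finset.univ.filter
          (fun d => Matrix.vecMul (fun b => u (finProdFinEquiv (astar, b))) Tp d ≠ 0) ⊆ D := by
        intro d hd
        simp only [Finset.mem_filter, Finset.mem_univ, true_and] at hd
        rw [hD, Finset.mem_filter]
        refine ⟨Finset.mem_univ _, ?_⟩
        apply Function.ne_iff.mpr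
        exact ⟨astar, hd⟩
      exact Finset.card_le_card hsub
    calc t ≤ spec (T2pow n) kstar * spec Tp (μ (kstar - 1)) := hthresh
    _ ≤ spec (T2pow n) kstar * D.card := Nat.mul_le_mul_left _ hDcard
    _ = ∑ _d ∈ D, spec (T2pow n) kstar := by rw [Finset.sum_const, smul_eq_mul]; ring
    _ ≤ ∑ d ∈ D, hammingNorm (Matrix.vecMul (wcol d) (T2pow n)) :=
        Finset.sum_le_sum hcolbound
    _ ≤ ∑ d : Fin p, hammingNorm (Matrix.vecMul (wcol d) (T2pow n)) :=
        Finset.sum_le_sum_of_subset (Finset.subset_univ D)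
    _ = ∑ d : Fin p, hammingNorm (Matrix.vecMul
          (fun a => Matrix.vecMul (fun b => u (finProdFinEquiv (a, b))) Tp d) (T2pow n)) := rfl
  refine ⟨I, hIcard, ?_, hmain⟩
  apply le_minDist (Finset.card_pos.mp (by omega))
  exact hmain
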